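/- arXiv:2005.13921 — 2 statements merged into one kernel-verified Lean document; each statement's English description precedes it below -/
import Mathlib

section
/- Let G be a finite two-player game with rational payoffs that is trivial for Player 1. If s₂ is a computable strategy of Player 2 in the infinitely repeated game with limit-of-means payoff, then s₂ has a computable best response. -/
open Filter

/-- The finite history of the first `t` stages induced by a strategy profile. -/
def hist {A1 A2 : Type} (s1 : List (A1 × A2) → A1) (s2 : List (A1 × A2) → A2) :
    ℕ → List (A1 × A2)
  | 0 => []
  | t + 1 => hist s1 s2 t ++ [(s1 (hist s1 s2 t), s2 (hist s1 s2 t))]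

/-- The action profile played at stage `t + 1` (0-indexed `t`) along the path of
play induced by a strategy profile. -/
def play {A1 A2 : Type} (s1 : List (A1 × A2) → A1) (s2 : List (A1 × A2) → A2)
    (t : ℕ) : A1 × A2 :=
  (s1 (hist s1 s2 t), s2 (hist s1 s2 t))

/-- Player 1's limit-of-means payoff of a strategy profile:
`liminf_{T→∞} (1/T) Σ_{t=1}^T u₁(h[t])` along the induced path of play. -/
noncomputable def lom {A1 A2 : Type} (u1 : A1 × A2 → ℚ)
    (s1 : List (A1 × A2) → A1) (s2 : List (A1 × A2) → A2) : ℝ :=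
  liminf (fun T : ℕ => (∑ t ∈ Finset.range T, (u1 (play s1 s2 t) : ℝ)) / T) atTop

lemma computable_of_finite {α β : Type} [Primcodable α] [Fintype α] [Primcodable β]
    [Inhabited β] (f : α → β) : Computable f := by
  classical
  set N := (Finset.univ.image (fun a : α => Encodable.encode a)).sup id + 1 with hN
  set l : List β :=
    (List.range N).map (fun n => ((Encodable.decode (α := α) n).map f).getD default) with hl
  have key : ∀ a : α, f a = (l[Encodable.encode a]?).getD default := by
    intro a
    have hlt : Encodable.encode a < N := by
      have : Encodable.encode a ≤ (Finset.univ.image (fun a : α => Encodable.encode a)).sup id :=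
        Finset.le_sup (f := id) (Finset.mem_image_of_mem _ (Finset.mem_univ a))
      omega
    have h2 : l[Encodable.encode a]?
        = some (((Encodable.decode (α := α) (Encodable.encode a)).map f).getD default) := by
      rw [hl, List.getElem?_map, List.getElem?_range hlt]; rfl
    rw [h2]
    simp [Encodable.encodek]
  have hc : Computable (fun a : α => (l[Encodable.encode a]?).getD default) := by
    have h1 : Primrec (fun n : ℕ => (l[n]?).getD default) :=
      Primrec.option_getD.comp (Primrec.list_getElem?.comp (.const l) .id) (.const default)
    exact h1.to_comp.comp Computable.encode
  exact hc.of_eq fun a => (key a).symm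

/-- If `G` is trivial for Player 1, then every computable strategy of Player 2
in the infinitely repeated game with limit-of-means payoff has a computable best
response. -/
theorem trivial_game_computable_strategy_has_computable_best_response
    {A1 A2 : Type} [Fintype A1] [Fintype A2] [Nonempty A1] [Nonempty A2]
    [Primcodable A1] [Primcodable A2]
    (u1 : A1 × A2 → ℚ) (M1 : ℚ)
    (hM1 : M1 = Finset.univ.sup' Finset.univ_nonempty u1)
    (htrivial : M1 = Finset.univ.inf' Finset.univ_nonempty
      (fun a2 : A2 => Finset.univ.sup' Finset.univ_nonempty (fun a1 : A1 => u1 (a1, a2))))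
    (s2 : List (A1 × A2) → A2) (hs2 : Computable s2) :
    ∃ s1 : List (A1 × A2) → A1,
      Computable s1 ∧
      ∀ s1' : List (A1 × A2) → A1, lom u1 s1' s2 ≤ lom u1 s1 s2 := by
  classical
  letI : Inhabited A1 := ⟨Classical.arbitrary A1⟩
  have hub : ∀ a : A1 × A2, u1 a ≤ M1 := by
    intro a; rw [hM1]; exact Finset.le_sup' u1 (Finset.mem_univ a)
  have hsup : ∀ a2 : A2,
      Finset.univ.sup' Finset.univ_nonempty (fun a1 : A1 => u1 (a1, a2)) = M1 := by
    intro a2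
    refine le_antisymm (Finset.sup'_le _ _ fun a1 _ => hub (a1, a2)) ?_
    rw [htrivial]
    exact Finset.inf'_le _ (Finset.mem_univ a2)
  have hex : ∀ a2 : A2, ∃ a1 : A1, u1 (a1, a2) = M1 := by
    intro a2
    obtain ⟨a1, -, h⟩ :=
      Finset.exists_mem_eq_sup' (Finset.univ_nonempty (α := A1)) (fun a1 : A1 => u1 (a1, a2))
    exact ⟨a1, by rw [← h, hsup a2]⟩
  choose g hg using hex
  set s1 : List (A1 × A2) → A1 := fun h => g (s2 h) with hs1def
  have hs1comp : Computable s1 := (computable_of_finite g).comp hs2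
  refine ⟨s1, hs1comp, ?_⟩
  have hplay : ∀ t : ℕ, (u1 (play s1 s2 t) : ℝ) = (M1 : ℝ) := by
    intro t
    have : u1 (play s1 s2 t) = M1 := hg (s2 (hist s1 s2 t))
    exact_mod_cast congrArg (fun q : ℚ => (q : ℝ)) this
  have h1 : lom u1 s1 s2 = (M1 : ℝ) := by
    unfold lom
    have hev : ∀ᶠ T in atTop,
        (∑ t ∈ Finset.range T, (u1 (play s1 s2 t) : ℝ)) / T = (M1 : ℝ) := by
      filter_upwards [eventually_gt_atTop 0] with T hT
      have hT' : (T : ℝ) ≠ 0 := Nat.cast_ne_zero.mpr hT.ne'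
      simp only [hplay, Finset.sum_const, Finset.card_range, nsmul_eq_mul]
      field_simp
    rw [liminf_congr hev, liminf_const]
  rw [h1]
  intro s1'
  unfold lom
  have hev : ∀ᶠ T in atTop,
      (∑ t ∈ Finset.range T, (u1 (play s1' s2 t) : ℝ)) / T ≤ (M1 : ℝ) := by
    filter_upwards [eventually_gt_atTop 0] with T hT
    have hT' : (0 : ℝ) < (T : ℝ) := by exact_mod_cast hT
    rw [div_le_iff₀ hT']
    calc ∑ t ∈ Finset.range T, (u1 (play s1' s2 t) : ℝ)
        ≤ ∑ _t ∈ Finset.range T, (M1 : ℝ) := by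
          refine Finset.sum_le_sum fun t _ => ?_
          exact_mod_cast hub (play s1' s2 t)
      _ = (M1 : ℝ) * T := by
          rw [Finset.sum_const, Finset.card_range, nsmul_eq_mul, mul_comm]
  have hlbq : ∀ a : A1 × A2, Finset.univ.inf' Finset.univ_nonempty u1 ≤ u1 a := fun a =>
    Finset.inf'_le u1 (Finset.mem_univ a)
  set m : ℚ := Finset.univ.inf' Finset.univ_nonempty u1 with hm
  have hbdd : IsBoundedUnder (· ≥ ·) atTop
      (fun T : ℕ => (∑ t ∈ Finset.range T, (u1 (play s1' s2 t) : ℝ)) / T) := by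
    refine isBoundedUnder_of_eventually_ge (a := (m : ℝ)) ?_
    filter_upwards [eventually_gt_atTop 0] with T hT
    have hT' : (0 : ℝ) < (T : ℝ) := by exact_mod_cast hT
    rw [le_div_iff₀ hT']
    calc (m : ℝ) * T = ∑ _t ∈ Finset.range T, (m : ℝ) := by
          rw [Finset.sum_const, Finset.card_range, nsmul_eq_mul, mul_comm]
      _ ≤ ∑ t ∈ Finset.range T, (u1 (play s1' s2 t) : ℝ) := by
          refine Finset.sum_le_sum fun t _ => ?_
          exact_mod_cast hlbq (play s1' s2 t)
  exact liminf_le_of_frequently_le hev.frequently hbdd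
end

section
/- Let G be a finite two-player game non-trivial for Player 1, and let t ∈ ℕ. Let s₁ be a strategy for Player 1 against σ₂ᵈ whose first play of C₁ occurs at stage t. Then Player 1's limit-of-means payoff satisfies υ₁(s₁, σ₂ᵈ) ≤ (M₁(D₂) + t·M₁)/(t+1), and the strategy that first plays C₁ at stage t+1 and afterwards plays D₁ exactly when t+2 divides the current stage and C₁ otherwise achieves limit-of-means payoff exactly (M₁(D₂) + (t+1)·M₁)/(t+2), which is strictly larger since M₁(D₂) < M₁. -/
open Filter

/-- Player 2's strategy `σ₂ᵈ`: play `D₂` while Player 1 has never played `C₁`;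
once Player 1 first played `C₁` at (1-indexed) stage `t₀ + 1`, play `D₂` in
stage `T + 1` iff `(t₀ + 2) ∣ (T + 1)`, and `C₂` otherwise. -/
def sigma2d {A1 A2 : Type} [DecidableEq A1] (C1 : A1) (C2 D2 : A2)
    (h : List (A1 × A2)) : A2 :=
  match h.findIdx? (fun p => decide (p.1 = C1)) with
  | none => D2
  | some t0 => if (t0 + 2) ∣ (h.length + 1) then D2 else C2

/-- Player 1's improved strategy: play a filler action `E₁ ≠ C₁` during the
first `t` stages, play `C₁` for the first time at stage `t + 1`, and afterwards
play `D₁` exactly at stages divisible by `t + 2` and `C₁` otherwise. -/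
def s1improved {A1 A2 : Type} (C1 D1 E1 : A1) (t : ℕ) (h : List (A1 × A2)) : A1 :=
  if h.length + 1 ≤ t then E1
  else if h.length + 1 = t + 1 then C1
  else if (t + 2) ∣ (h.length + 1) then D1 else C1

lemma hist_eq_map {A1 A2 : Type} (s1 : List (A1 × A2) → A1) (s2 : List (A1 × A2) → A2) :
    ∀ T, hist s1 s2 T = (List.range T).map (play s1 s2)
  | 0 => rfl
  | T + 1 => by
      rw [List.range_succ, List.map_append, ← hist_eq_map s1 s2 T]
      rfl

lemma hist_length {A1 A2 : Type} (s1 : List (A1 × A2) → A1) (s2 : List (A1 × A2) → A2)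
    (T : ℕ) : (hist s1 s2 T).length = T := by
  rw [hist_eq_map]; simp

lemma sum_ite_dvd (d N : ℕ) (x y : ℝ) :
    ∑ T ∈ Finset.range N, (if d ∣ (T + 1) then x else y)
      = ((N / d : ℕ) : ℝ) * x + ((N : ℝ) - ((N / d : ℕ) : ℝ)) * y := by
  rw [Finset.sum_ite, Finset.sum_const, Finset.sum_const]
  have hcard : ((Finset.range N).filter (fun T => d ∣ (T + 1))).card = N / d :=
    Nat.card_multiples N d
  have hcard2 : ((Finset.range N).filter (fun T => ¬ d ∣ (T + 1))).card = N - N / d := by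
    have := Finset.card_filter_add_card_filter_not
      (s := Finset.range N) (p := fun T => d ∣ (T + 1))
    simp only [Finset.card_range] at this
    omega
  rw [hcard, hcard2, nsmul_eq_mul, nsmul_eq_mul, Nat.cast_sub (Nat.div_le_self N d)]

lemma ratio_tendsto (d : ℕ) (hd : 0 < d) :
    Tendsto (fun N : ℕ => ((N / d : ℕ) : ℝ) / N) atTop (nhds (1 / d)) := by
  have key : ∀ᶠ N : ℕ in atTop, ((N / d : ℕ) : ℝ) / N
      = 1 / d - ((N % d : ℕ) : ℝ) / (d * N) := by
    filter_upwards [eventually_ge_atTop 1] with N hN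
    have hN0 : (N : ℝ) ≠ 0 := by positivity
    have hd0 : (d : ℝ) ≠ 0 := by positivity
    have hdiv : (d : ℝ) * ((N / d : ℕ) : ℝ) + ((N % d : ℕ) : ℝ) = N := by
      exact_mod_cast congrArg (Nat.cast : ℕ → ℝ) (Nat.div_add_mod N d)
    field_simp
    linear_combination hdiv
  have h0 : Tendsto (fun N : ℕ => ((N % d : ℕ) : ℝ) / (d * N)) atTop (nhds 0) := by
    apply squeeze_zero (fun N => by positivity) (g := fun N : ℕ => 1 / (N : ℝ))
    · intro N
      rcases Nat.eq_zero_or_pos N with h | h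
      · simp [h]
      · have h1 : ((N % d : ℕ) : ℝ) ≤ d := by exact_mod_cast (Nat.mod_lt N hd).le
        have h2 : (0:ℝ) < d * N := by positivity
        rw [div_le_div_iff₀ h2 (by positivity)]
        push_cast
        nlinarith [h1, (by exact_mod_cast h : (1:ℝ) ≤ N)]
    · exact tendsto_one_div_atTop_nhds_zero_nat
  have := (tendsto_const_nhds (x := (1 : ℝ) / d) (f := atTop (α := ℕ))).sub h0
  rw [sub_zero] at this
  exact this.congr' (EventuallyEq.symm key)

lemma avg_tendsto (f : ℕ → ℝ) (d N0 : ℕ) (hd : 0 < d) (x y : ℝ)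
    (hf : ∀ T, N0 ≤ T → f T = if d ∣ (T + 1) then x else y) :
    Tendsto (fun N : ℕ => (∑ T ∈ Finset.range N, f T) / N) atTop
      (nhds ((x + ((d : ℝ) - 1) * y) / d)) := by
  set C : ℝ := ∑ T ∈ Finset.range N0, (f T - if d ∣ (T + 1) then x else y) with hC
  have hsum : ∀ N, N0 ≤ N → ∑ T ∈ Finset.range N, f T
      = C + (((N / d : ℕ) : ℝ) * x + ((N : ℝ) - ((N / d : ℕ) : ℝ)) * y) := by
    intro N hN
    have h1 : ∑ T ∈ Finset.range N, (f T - if d ∣ (T + 1) then x else y) = C := by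
      rw [hC]
      apply (Finset.sum_subset (Finset.range_subset_range.2 hN) ?_).symm
      intro T _ hT
      rw [hf T (by simp at hT ⊢; omega)]
      ring
    have h2 := sum_ite_dvd d N x y
    rw [Finset.sum_sub_distrib] at h1
    linarith [h1, h2]
  have heq : (fun N : ℕ => (∑ T ∈ Finset.range N, f T) / N) =ᶠ[atTop]
      (fun N : ℕ => C * (1 / N) + ((((N / d : ℕ) : ℝ) / N) * x
        + (1 - ((N / d : ℕ) : ℝ) / N) * y)) := by
    filter_upwards [eventually_ge_atTop (max N0 1)] with N hN
    have hN0 : (N : ℝ) ≠ 0 := by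
      have : 1 ≤ N := le_trans (le_max_right _ _) hN
      positivity
    rw [hsum N (le_trans (le_max_left _ _) hN)]
    field_simp
    try ring
  have h1 : Tendsto (fun N : ℕ => C * (1 / N)) atTop (nhds 0) := by
    have := tendsto_one_div_atTop_nhds_zero_nat.const_mul C
    simpa using this
  have h2 := ratio_tendsto d hd
  have h3 : Tendsto (fun N : ℕ => C * (1 / N) + ((((N / d : ℕ) : ℝ) / N) * x
        + (1 - ((N / d : ℕ) : ℝ) / N) * y)) atTop
      (nhds (0 + ((1 / d) * x + (1 - 1 / d) * y))) :=
    h1.add ((h2.mul_const x).add (((tendsto_const_nhds).sub h2).mul_const y))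
  have : (0 : ℝ) + ((1 / d) * x + (1 - 1 / d) * y) = (x + ((d : ℝ) - 1) * y) / d := by
    have hd0 : (d : ℝ) ≠ 0 := by positivity
    field_simp
    try ring
  rw [this] at h3
  exact h3.congr' (EventuallyEq.symm heq)

lemma hist_getElem {A1 A2 : Type} (s1 : List (A1 × A2) → A1) (s2 : List (A1 × A2) → A2)
    (T i : ℕ) (h : i < (hist s1 s2 T).length) :
    (hist s1 s2 T)[i] = play s1 s2 i := by
  have hi : i < T := by rwa [hist_length] at h
  simp only [hist_eq_map, List.getElem_map, List.getElem_range]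

lemma sigma2d_none {A1 A2 : Type} [DecidableEq A1] (C1 : A1) (C2 D2 : A2)
    (h : List (A1 × A2)) (hn : h.findIdx? (fun p => decide (p.1 = C1)) = none) :
    sigma2d C1 C2 D2 h = D2 := by
  unfold sigma2d
  rw [hn]

lemma sigma2d_some {A1 A2 : Type} [DecidableEq A1] (C1 : A1) (C2 D2 : A2)
    (h : List (A1 × A2)) (t0 : ℕ)
    (hs : h.findIdx? (fun p => decide (p.1 = C1)) = some t0) :
    sigma2d C1 C2 D2 h = if (t0 + 2) ∣ (h.length + 1) then D2 else C2 := by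
  unfold sigma2d
  rw [hs]

/-- If Player 1's strategy `s₁` first plays `C₁` at (1-indexed) stage `t`
against `σ₂ᵈ`, then `υ₁(s₁, σ₂ᵈ) ≤ (M₁(D₂) + t·M₁)/(t+1)`, while the strategy
that first plays `C₁` at stage `t + 1` and afterwards plays `D₁` exactly when
`t + 2` divides the current stage achieves limit-of-means payoff exactly
`(M₁(D₂) + (t+1)·M₁)/(t+2)`, which is strictly larger since `M₁(D₂) < M₁`. -/
theorem delay_first_cooperation_strictly_improves
    {A1 A2 : Type} [Fintype A1] [Fintype A2] [Nonempty A1] [Nonempty A2]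
    [DecidableEq A1]
    (u1 : A1 × A2 → ℚ) (C1 D1 E1 : A1) (C2 D2 : A2) (M1 M1D2 : ℚ)
    (hM1 : M1 = Finset.univ.sup' Finset.univ_nonempty u1)
    (hM1D2 : M1D2 = Finset.univ.sup' Finset.univ_nonempty (fun a1 : A1 => u1 (a1, D2)))
    (hC : u1 (C1, C2) = M1) (hD : u1 (D1, D2) = M1D2) (hlt : M1D2 < M1)
    (hE1 : E1 ≠ C1)
    (t : ℕ) (ht : 1 ≤ t)
    (s1 : List (A1 × A2) → A1)
    (hfirst : (play s1 (sigma2d C1 C2 D2) (t - 1)).1 = C1)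
    (hbefore : ∀ t' < t - 1, (play s1 (sigma2d C1 C2 D2) t').1 ≠ C1) :
    lom u1 s1 (sigma2d C1 C2 D2) ≤ ((M1D2 : ℝ) + t * M1) / (t + 1) ∧
    lom u1 (s1improved C1 D1 E1 t) (sigma2d C1 C2 D2)
      = ((M1D2 : ℝ) + (t + 1) * M1) / (t + 2) ∧
    ((M1D2 : ℝ) + t * M1) / (t + 1) < ((M1D2 : ℝ) + (t + 1) * M1) / (t + 2) := by
  have hltR : (M1D2 : ℝ) < (M1 : ℝ) := by exact_mod_cast hlt
  -- Part 3: strict inequality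
  have part3 : ((M1D2 : ℝ) + t * M1) / (t + 1) < ((M1D2 : ℝ) + (t + 1) * M1) / (t + 2) := by
    have h1 : (0:ℝ) < (t:ℝ) + 1 := by positivity
    have h2 : (0:ℝ) < (t:ℝ) + 2 := by positivity
    rw [div_lt_div_iff₀ h1 h2]
    nlinarith [hltR, (by positivity : (0:ℝ) ≤ (t:ℝ))]
  -- characterization of sigma2d along the path of s1
  have hfind_none : ∀ T, T ≤ t - 1 →
      (hist s1 (sigma2d C1 C2 D2) T).findIdx? (fun p => decide (p.1 = C1)) = none := by
    intro T hT
    rw [List.findIdx?_eq_none_iff]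
    intro x hx
    rw [hist_eq_map] at hx
    simp only [List.mem_map, List.mem_range] at hx
    obtain ⟨t', ht', rfl⟩ := hx
    simp only [decide_eq_false_iff_not]
    exact hbefore t' (by omega)
  have hfind_some : ∀ T, t ≤ T →
      (hist s1 (sigma2d C1 C2 D2) T).findIdx? (fun p => decide (p.1 = C1)) = some (t - 1) := by
    intro T hT
    rw [List.findIdx?_eq_some_iff_getElem]
    have hlen : (hist s1 (sigma2d C1 C2 D2) T).length = T := hist_length _ _ _
    refine ⟨by omega, ?_, ?_⟩
    · rw [hist_getElem]
      simp [hfirst]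
    · intro j hj
      rw [hist_getElem]
      simp only [decide_eq_true_eq]
      exact hbefore j hj
  have hplay2 : ∀ T, (play s1 (sigma2d C1 C2 D2) T).2
      = if T < t then D2 else if (t + 1) ∣ (T + 1) then D2 else C2 := by
    intro T
    show sigma2d C1 C2 D2 (hist s1 (sigma2d C1 C2 D2) T) = _
    by_cases h : T < t
    · rw [sigma2d_none C1 C2 D2 _ (hfind_none T (by omega))]
      simp [h]
    · rw [sigma2d_some C1 C2 D2 _ _ (hfind_some T (by omega))]
      have h2 : t - 1 + 2 = t + 1 := by omega
      simp only [hist_length, h2, h, if_false]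
  -- Part 1
  have hub : ∀ T, (u1 (play s1 (sigma2d C1 C2 D2) T) : ℝ)
      ≤ if (t + 1) ∣ (T + 1) then (M1D2 : ℝ) else (M1 : ℝ) := by
    intro T
    by_cases hdvd : (t + 1) ∣ (T + 1)
    · have hTt : ¬ T < t := by
        intro h
        have := Nat.le_of_dvd (by omega) hdvd
        omega
      have h2 : (play s1 (sigma2d C1 C2 D2) T).2 = D2 := by
        rw [hplay2]; simp [hTt, hdvd]
      have hpe : play s1 (sigma2d C1 C2 D2) T = ((play s1 (sigma2d C1 C2 D2) T).1, D2) :=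
        Prod.ext rfl h2
      have hle : u1 ((play s1 (sigma2d C1 C2 D2) T).1, D2) ≤ M1D2 := by
        rw [hM1D2]
        exact Finset.le_sup' (fun a1 : A1 => u1 (a1, D2)) (Finset.mem_univ _)
      simp only [hdvd, if_true]
      rw [hpe]
      exact_mod_cast hle
    · have hle : u1 (play s1 (sigma2d C1 C2 D2) T) ≤ M1 := by
        rw [hM1]
        exact Finset.le_sup' u1 (Finset.mem_univ _)
      simp only [hdvd, if_false]
      exact_mod_cast hle
  have part1 : lom u1 s1 (sigma2d C1 C2 D2) ≤ ((M1D2 : ℝ) + t * M1) / (t + 1) := by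
    unfold lom
    apply liminf_le_of_frequently_le
    · rw [frequently_atTop]
      intro a
      refine ⟨(a + 1) * (t + 1), ?_, ?_⟩
      · calc a ≤ a + 1 := by omega
          _ ≤ (a + 1) * (t + 1) := Nat.le_mul_of_pos_right _ (by omega)
      · have hdivN : (a + 1) * (t + 1) / (t + 1) = a + 1 :=
          Nat.mul_div_cancel _ (by omega)
        have hsumle : ∑ T ∈ Finset.range ((a + 1) * (t + 1)),
              (u1 (play s1 (sigma2d C1 C2 D2) T) : ℝ)
            ≤ ∑ T ∈ Finset.range ((a + 1) * (t + 1)),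
              (if (t + 1) ∣ (T + 1) then (M1D2 : ℝ) else (M1 : ℝ)) :=
          Finset.sum_le_sum (fun T _ => hub T)
        rw [sum_ite_dvd, hdivN] at hsumle
        have hNpos : (0:ℝ) < (((a + 1) * (t + 1) : ℕ) : ℝ) := by positivity
        rw [div_le_iff₀ hNpos]
        have hNr : (((a + 1) * (t + 1) : ℕ) : ℝ) = ((a:ℝ) + 1) * ((t:ℝ) + 1) := by
          push_cast; ring
        have hrhs : ((M1D2 : ℝ) + t * M1) / (t + 1) * (((a + 1) * (t + 1) : ℕ) : ℝ)
            = ((a:ℝ) + 1) * M1D2 + (((a:ℝ) + 1) * ((t:ℝ) + 1) - ((a:ℝ) + 1)) * M1 := by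
          rw [hNr]
          field_simp
          ring
        rw [hrhs]
        rw [hNr] at hsumle
        push_cast at hsumle ⊢
        linarith
    · have hm : ∀ v : A1 × A2,
          ((Finset.univ.inf' Finset.univ_nonempty u1 : ℚ) : ℝ) ≤ (u1 v : ℝ) := fun v => by
        exact_mod_cast Finset.inf'_le u1 (Finset.mem_univ v)
      set m : ℝ := ((Finset.univ.inf' Finset.univ_nonempty u1 : ℚ) : ℝ) with hmdef
      apply Filter.isBoundedUnder_of
      refine ⟨min m 0, fun N => ?_⟩
      rcases Nat.eq_zero_or_pos N with h | h
      · simp [h, min_le_right]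
      · have hNpos : (0:ℝ) < (N:ℝ) := by exact_mod_cast h
        rw [ge_iff_le, le_div_iff₀ hNpos]
        have hsum : (N:ℝ) * m ≤ ∑ T ∈ Finset.range N, (u1 (play s1 (sigma2d C1 C2 D2) T) : ℝ) := by
          have := Finset.card_nsmul_le_sum (Finset.range N)
            (fun T => (u1 (play s1 (sigma2d C1 C2 D2) T) : ℝ)) m
            (fun T _ => hm _)
          simpa [nsmul_eq_mul] using this
        have : min m 0 * N ≤ m * N := by
          apply mul_le_mul_of_nonneg_right (min_le_left _ _) (le_of_lt hNpos)
        nlinarith [hsum]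
  -- Part 2
  have hplay1' : ∀ T, (play (s1improved C1 D1 E1 t) (sigma2d C1 C2 D2) T).1
      = if T < t then E1 else if T = t then C1
        else if (t + 2) ∣ (T + 1) then D1 else C1 := by
    intro T
    show s1improved C1 D1 E1 t (hist (s1improved C1 D1 E1 t) (sigma2d C1 C2 D2) T) = _
    unfold s1improved
    rw [hist_length]
    have e1 : T + 1 ≤ t ↔ T < t := by omega
    have e2 : T + 1 = t + 1 ↔ T = t := by omega
    simp only [e1, e2]
  have hfind_none' : ∀ T, T ≤ t →
      (hist (s1improved C1 D1 E1 t) (sigma2d C1 C2 D2) T).findIdx?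
        (fun p => decide (p.1 = C1)) = none := by
    intro T hT
    rw [List.findIdx?_eq_none_iff]
    intro x hx
    rw [hist_eq_map] at hx
    simp only [List.mem_map, List.mem_range] at hx
    obtain ⟨t', ht', rfl⟩ := hx
    simp only [decide_eq_false_iff_not]
    rw [hplay1']
    simp only [show t' < t by omega, if_true]
    exact hE1
  have hfind_some' : ∀ T, t + 1 ≤ T →
      (hist (s1improved C1 D1 E1 t) (sigma2d C1 C2 D2) T).findIdx?
        (fun p => decide (p.1 = C1)) = some t := by
    intro T hT
    rw [List.findIdx?_eq_some_iff_getElem]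
    have hlen : (hist (s1improved C1 D1 E1 t) (sigma2d C1 C2 D2) T).length = T :=
      hist_length _ _ _
    refine ⟨by omega, ?_, ?_⟩
    · rw [hist_getElem]
      simp only [decide_eq_true_eq]
      rw [hplay1']
      simp
    · intro j hj
      rw [hist_getElem]
      simp only [decide_eq_true_eq]
      rw [hplay1']
      simp only [hj, if_true]
      exact hE1
  have hplay2' : ∀ T, (play (s1improved C1 D1 E1 t) (sigma2d C1 C2 D2) T).2
      = if T ≤ t then D2 else if (t + 2) ∣ (T + 1) then D2 else C2 := by
    intro T
    show sigma2d C1 C2 D2 (hist (s1improved C1 D1 E1 t) (sigma2d C1 C2 D2) T) = _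
    by_cases h : T ≤ t
    · rw [sigma2d_none C1 C2 D2 _ (hfind_none' T h)]
      simp [h]
    · rw [sigma2d_some C1 C2 D2 _ _ (hfind_some' T (by omega))]
      simp only [hist_length, h, if_false]
  have hpay' : ∀ T, t + 1 ≤ T →
      (u1 (play (s1improved C1 D1 E1 t) (sigma2d C1 C2 D2) T) : ℝ)
        = if (t + 2) ∣ (T + 1) then (M1D2 : ℝ) else (M1 : ℝ) := by
    intro T hT
    by_cases hdvd : (t + 2) ∣ (T + 1)
    · have hpe : play (s1improved C1 D1 E1 t) (sigma2d C1 C2 D2) T = (D1, D2) := by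
        refine Prod.ext ?_ ?_
        · rw [hplay1']
          simp [show ¬ T < t by omega, show T ≠ t by omega, hdvd]
        · rw [hplay2']
          simp [show ¬ T ≤ t by omega, hdvd]
      rw [hpe, hD]
      simp [hdvd]
    · have hpe : play (s1improved C1 D1 E1 t) (sigma2d C1 C2 D2) T = (C1, C2) := by
        refine Prod.ext ?_ ?_
        · rw [hplay1']
          simp [show ¬ T < t by omega, show T ≠ t by omega, hdvd]
        · rw [hplay2']
          simp [show ¬ T ≤ t by omega, hdvd]
      rw [hpe, hC]
      simp [hdvd]
  have hconv := avg_tendsto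
      (fun T => (u1 (play (s1improved C1 D1 E1 t) (sigma2d C1 C2 D2) T) : ℝ))
      (t + 2) (t + 1) (by omega) (M1D2 : ℝ) (M1 : ℝ)
      (fun T hT => hpay' T hT)
  have hval : ((M1D2 : ℝ) + (((t + 2 : ℕ) : ℝ) - 1) * M1) / ((t + 2 : ℕ) : ℝ)
      = ((M1D2 : ℝ) + ((t:ℝ) + 1) * M1) / ((t:ℝ) + 2) := by
    push_cast
    ring_nf
  rw [hval] at hconv
  have part2 : lom u1 (s1improved C1 D1 E1 t) (sigma2d C1 C2 D2)
      = ((M1D2 : ℝ) + ((t:ℝ) + 1) * M1) / ((t:ℝ) + 2) := by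
    unfold lom
    exact hconv.liminf_eq
  exact ⟨part1, part2, part3⟩
end
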